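/- If v is a multiplier system of weight r on a subgroup Γ ⊂ Sp(g,ℤ) and L ∈ Sp(g,ℤ) normalizes Γ (or more generally, restricting to LΓL⁻¹ ∩ Γ), then ṽ(M) := v(LML⁻¹)·σ(LML⁻¹,L)/σ(L,M) is again a multiplier system of weight r. -/

import Mathlib

open Matrix Complex

noncomputable section

/-- The space of `2g × 2g` real matrices (symplectic candidates). -/
abbrev SpMat (g : ℕ) := Matrix (Fin g ⊕ Fin g) (Fin g ⊕ Fin g) ℝ

/-- The Siegel upper half plane of genus `g`: symmetric complex matrices with
positive definite imaginary part. -/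
def SiegelUHP (g : ℕ) : Set (Matrix (Fin g) (Fin g) ℂ) :=
  {Z | Z.IsSymm ∧ Matrix.PosDef (Matrix.of fun i j => (Z i j).im)}

/-- Coercion of a real matrix to a complex matrix. -/
def cmat {g : ℕ} (A : Matrix (Fin g) (Fin g) ℝ) : Matrix (Fin g) (Fin g) ℂ :=
  A.map (fun x => (x : ℂ))

/-- The automorphy factor `J(M,Z) = det (C Z + D)`. -/
def Jfac {g : ℕ} (M : SpMat g) (Z : Matrix (Fin g) (Fin g) ℂ) : ℂ :=
  (cmat M.toBlocks₂₁ * Z + cmat M.toBlocks₂₂).det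

/-- The action `M⟨Z⟩ = (A Z + B)(C Z + D)⁻¹` on the Siegel upper half plane. -/
def spAct {g : ℕ} (M : SpMat g) (Z : Matrix (Fin g) (Fin g) ℂ) :
    Matrix (Fin g) (Fin g) ℂ :=
  (cmat M.toBlocks₁₁ * Z + cmat M.toBlocks₁₂) *
    (cmat M.toBlocks₂₁ * Z + cmat M.toBlocks₂₂)⁻¹

/-- The base point `i·E` of the Siegel upper half plane. -/
def iE (g : ℕ) : Matrix (Fin g) (Fin g) ℂ := Complex.I • 1

/-- `L` is a continuous branch of `arg J(M, ·)` on the Siegel upper half plane,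
normalized to the principal value at `Z = iE`. -/
def IsArgBranch (g : ℕ) (L : SpMat g → Matrix (Fin g) (Fin g) ℂ → ℝ) : Prop :=
  (∀ M ∈ Matrix.symplecticGroup (Fin g) ℝ, ContinuousOn (L M) (SiegelUHP g)) ∧
  (∀ M ∈ Matrix.symplecticGroup (Fin g) ℝ, ∀ Z ∈ SiegelUHP g,
      (‖Jfac M Z‖ : ℂ) * Complex.exp (Complex.I * (L M Z)) = Jfac M Z) ∧
  (∀ M ∈ Matrix.symplecticGroup (Fin g) ℝ, L M (iE g) = Complex.arg (Jfac M (iE g)))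

/-- The cocycle `w(M,N) = (1/2π)(L(MN,Z) - L(M,NZ) - L(N,Z))`, evaluated at the
base point `Z = iE` (it is independent of `Z`). -/
def wcoc {g : ℕ} (L : SpMat g → Matrix (Fin g) (Fin g) ℂ → ℝ) (M N : SpMat g) : ℝ :=
  (L (M * N) (iE g) - L M (spAct N (iE g)) - L N (iE g)) / (2 * Real.pi)

/-- A multiplier system of weight `r` on `Γ`: values of absolute value `1`
satisfying `v(MN) = v(M)v(N)·e^{2πi r w(M,N)}`. -/
def IsMultiplier (g : ℕ) (L : SpMat g → Matrix (Fin g) (Fin g) ℂ → ℝ)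
    (Γ : Set (SpMat g)) (r : ℝ) (v : SpMat g → ℂ) : Prop :=
  (∀ M ∈ Γ, ‖v M‖ = 1) ∧
  (∀ M ∈ Γ, ∀ N ∈ Γ, v (M * N) =
      v M * v N * Complex.exp (2 * Real.pi * Complex.I * r * wcoc L M N))

section Aux
open Matrix Complex

variable {g : ℕ}

lemma cmat_apply (A : Matrix (Fin g) (Fin g) ℝ) (i j) : cmat A i j = (A i j : ℂ) := rfl

lemma cmat_mul (A B : Matrix (Fin g) (Fin g) ℝ) : cmat (A*B) = cmat A * cmat B := by
  ext i j; simp [cmat, Matrix.mul_apply]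

lemma cmat_add (A B : Matrix (Fin g) (Fin g) ℝ) : cmat (A+B) = cmat A + cmat B := by
  ext i j; simp [cmat]

lemma cmat_sub (A B : Matrix (Fin g) (Fin g) ℝ) : cmat (A-B) = cmat A - cmat B := by
  ext i j; simp [cmat]

lemma cmat_one : cmat (1 : Matrix (Fin g) (Fin g) ℝ) = 1 := by
  ext i j; by_cases h : i = j <;> simp [cmat, Matrix.one_apply, h]

lemma cmat_transpose (A : Matrix (Fin g) (Fin g) ℝ) : cmat Aᵀ = (cmat A)ᵀ := by
  ext i j; simp [cmat]

/-- The real block relations of a symplectic matrix. -/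
lemma sympl_rel_real {M : SpMat g} (hM : M ∈ Matrix.symplecticGroup (Fin g) ℝ) :
    M.toBlocks₁₁ᵀ * M.toBlocks₂₁ = M.toBlocks₂₁ᵀ * M.toBlocks₁₁ ∧
    M.toBlocks₁₂ᵀ * M.toBlocks₂₂ = M.toBlocks₂₂ᵀ * M.toBlocks₁₂ ∧
    M.toBlocks₁₁ᵀ * M.toBlocks₂₂ - M.toBlocks₂₁ᵀ * M.toBlocks₁₂ = 1 := by
  rw [SymplecticGroup.mem_iff'] at hM
  set a := M.toBlocks₁₁; set b := M.toBlocks₁₂; set c := M.toBlocks₂₁; set d := M.toBlocks₂₂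
  rw [show M = Matrix.fromBlocks a b c d from (Matrix.fromBlocks_toBlocks M).symm] at hM
  rw [Matrix.J, Matrix.fromBlocks_transpose, Matrix.fromBlocks_multiply,
    Matrix.fromBlocks_multiply] at hM
  have h11 := congrArg Matrix.toBlocks₁₁ hM
  have h12 := congrArg Matrix.toBlocks₁₂ hM
  have h22 := congrArg Matrix.toBlocks₂₂ hM
  simp only [Matrix.toBlocks_fromBlocks₁₁, Matrix.toBlocks_fromBlocks₁₂,
    Matrix.toBlocks_fromBlocks₂₂, Matrix.mul_zero, Matrix.mul_one, Matrix.zero_mul,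
    Matrix.mul_neg, Matrix.neg_mul, zero_add, add_zero] at h11 h12 h22
  rw [add_neg_eq_zero] at h11 h22
  refine ⟨h11.symm, h22.symm, ?_⟩
  have h12' : cᵀ * b - aᵀ * d = -1 := by rw [sub_eq_add_neg]; exact h12
  rw [← neg_sub, h12', neg_neg]
end Aux

section Aux2
open Matrix Complex

variable {g : ℕ}

local notation "Mc" => Matrix (Fin g) (Fin g) ℂ

/-- Complex blocks. -/
def bA (M : SpMat g) : Matrix (Fin g) (Fin g) ℂ := cmat M.toBlocks₁₁
def bB (M : SpMat g) : Matrix (Fin g) (Fin g) ℂ := cmat M.toBlocks₁₂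
def bC (M : SpMat g) : Matrix (Fin g) (Fin g) ℂ := cmat M.toBlocks₂₁
def bD (M : SpMat g) : Matrix (Fin g) (Fin g) ℂ := cmat M.toBlocks₂₂

lemma sympl_relC {M : SpMat g} (hM : M ∈ Matrix.symplecticGroup (Fin g) ℝ) :
    (bA M)ᵀ * bC M = (bC M)ᵀ * bA M ∧ (bB M)ᵀ * bD M = (bD M)ᵀ * bB M ∧
    (bA M)ᵀ * bD M - (bC M)ᵀ * bB M = 1 := by
  obtain ⟨h1, h2, h3⟩ := sympl_rel_real hM
  refine ⟨?_, ?_, ?_⟩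
  · have := congrArg cmat h1
    simpa [cmat_mul, cmat_transpose, bA, bC] using this
  · have := congrArg cmat h2
    simpa [cmat_mul, cmat_transpose, bB, bD] using this
  · have := congrArg cmat h3
    simpa [cmat_sub, cmat_mul, cmat_transpose, cmat_one, bA, bB, bC, bD] using this

lemma key_id {A B C D Z W : Mc} (h1 : Aᵀ*C = Cᵀ*A) (h2 : Bᵀ*D = Dᵀ*B)
    (h3 : Aᵀ*D - Cᵀ*B = 1) :
    (Z*Aᵀ+Bᵀ)*(C*W+D) - (Z*Cᵀ+Dᵀ)*(A*W+B) = Z - W := by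
  have h4 : Bᵀ*C - Dᵀ*A = -(1 : Mc) := by
    have ht := congrArg Matrix.transpose h3
    simp only [Matrix.transpose_sub, Matrix.transpose_mul, Matrix.transpose_transpose,
      Matrix.transpose_one] at ht
    rw [← neg_sub, ht]
  have expand : (Z*Aᵀ+Bᵀ)*(C*W+D) - (Z*Cᵀ+Dᵀ)*(A*W+B)
      = Z*(Aᵀ*C - Cᵀ*A)*W + Z*(Aᵀ*D - Cᵀ*B) + (Bᵀ*C - Dᵀ*A)*W + (Bᵀ*D - Dᵀ*B) := by
    noncomm_ring
  rw [expand, h1, h2, h3, h4]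
  simp [Matrix.neg_mul, sub_eq_add_neg]

/-- real positive definite gives positivity of the complex hermitian form. -/
lemma quad_pos {P : Matrix (Fin g) (Fin g) ℝ} (hP : P.PosDef) {v : Fin g → ℂ}
    (hv : v ≠ 0) : 0 < (star v ⬝ᵥ (cmat P) *ᵥ v).re := by
  classical
  set x : Fin g → ℝ := fun i => (v i).re with hx
  set y : Fin g → ℝ := fun i => (v i).im with hy
  have key : (star v ⬝ᵥ (cmat P) *ᵥ v).re = x ⬝ᵥ P *ᵥ x + y ⬝ᵥ P *ᵥ y := by
    simp only [dotProduct, Matrix.mulVec, Pi.star_apply, cmat_apply, dotProduct,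
      Finset.mul_sum, Complex.re_sum]
    rw [← Finset.sum_add_distrib]
    refine Finset.sum_congr rfl fun i _ => ?_
    rw [← Finset.sum_add_distrib]
    refine Finset.sum_congr rfl fun j _ => ?_
    simp only [RCLike.star_def, Complex.mul_re, Complex.mul_im, Complex.conj_re, Complex.conj_im,
      Complex.ofReal_re, Complex.ofReal_im]
    ring
  rw [key]
  have hxy : x ≠ 0 ∨ y ≠ 0 := by
    by_contra h
    push_neg at h
    apply hv
    funext i
    have h1 := congrFun h.1 i
    have h2 := congrFun h.2 i
    simp only [Pi.zero_apply] at h1 h2 ⊢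
    exact Complex.ext h1 h2
  rcases hxy with h | h
  · have h1 := hP.dotProduct_mulVec_pos h
    have h2 := hP.posSemidef.dotProduct_mulVec_nonneg y
    simp only [star_trivial] at h1 h2
    linarith
  · have h1 := hP.dotProduct_mulVec_pos h
    have h2 := hP.posSemidef.dotProduct_mulVec_nonneg x
    simp only [star_trivial] at h1 h2
    linarith
end Aux2

section Aux3
open Matrix Complex

variable {g : ℕ}

local notation "Mc" => Matrix (Fin g) (Fin g) ℂ

/-- entrywise conjugate -/
def mconj (A : Matrix (Fin g) (Fin g) ℂ) : Matrix (Fin g) (Fin g) ℂ := A.map star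

lemma mconj_mul (A B : Mc) : mconj (A*B) = mconj A * mconj B := by
  ext i j; simp [mconj, Matrix.mul_apply, star_sum]

lemma mconj_add (A B : Mc) : mconj (A+B) = mconj A + mconj B := by
  ext i j; simp [mconj]

lemma mconj_one : mconj (1 : Mc) = 1 := by
  ext i j; by_cases h : i = j <;> simp [mconj, Matrix.one_apply, h]

lemma mconj_cmat (A : Matrix (Fin g) (Fin g) ℝ) : mconj (cmat A) = cmat A := by
  ext i j; simp [mconj, cmat]

lemma mconj_transpose (A : Mc) : mconj Aᵀ = (mconj A)ᵀ := by
  ext i j; simp [mconj]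

lemma cmat_conjTranspose (A : Matrix (Fin g) (Fin g) ℝ) : (cmat A)ᴴ = (cmat A)ᵀ := by
  ext i j; simp [cmat, Complex.conj_ofReal]

/-- numerator and denominator -/
def X1 (M : SpMat g) (Z : Mc) : Matrix (Fin g) (Fin g) ℂ := bA M * Z + bB M
def X2 (M : SpMat g) (Z : Mc) : Matrix (Fin g) (Fin g) ℂ := bC M * Z + bD M

lemma Jfac_eq (M : SpMat g) (Z : Mc) : Jfac M Z = (X2 M Z).det := rfl

lemma spAct_eq (M : SpMat g) (Z : Mc) : spAct M Z = X1 M Z * (X2 M Z)⁻¹ := rfl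

/-- imaginary-part matrix -/
def ImM (Z : Mc) : Matrix (Fin g) (Fin g) ℝ := Matrix.of fun i j => (Z i j).im

lemma mconj_sub_self (Z : Mc) : mconj Z - Z = (-(2*Complex.I)) • cmat (ImM Z) := by
  ext i j
  simp only [Matrix.sub_apply, Matrix.smul_apply, mconj, Matrix.map_apply, cmat_apply, ImM,
    Matrix.of_apply, smul_eq_mul]
  apply Complex.ext <;> simp [Complex.mul_re, Complex.mul_im] <;> ring

lemma X2H {M : SpMat g} {Z : Mc} (hZ : Z.IsSymm) :
    (X2 M Z)ᴴ = mconj Z * (bC M)ᵀ + (bD M)ᵀ := by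
  have hZH : Zᴴ = mconj Z := by
    show Zᵀ.map star = mconj Z
    rw [hZ]; rfl
  rw [X2, Matrix.conjTranspose_add, Matrix.conjTranspose_mul, hZH]
  simp only [bC, bD, cmat_conjTranspose]

lemma X1H {M : SpMat g} {Z : Mc} (hZ : Z.IsSymm) :
    (X1 M Z)ᴴ = mconj Z * (bA M)ᵀ + (bB M)ᵀ := by
  have hZH : Zᴴ = mconj Z := by
    show Zᵀ.map star = mconj Z
    rw [hZ]; rfl
  rw [X1, Matrix.conjTranspose_add, Matrix.conjTranspose_mul, hZH]
  simp only [bA, bB, cmat_conjTranspose]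

lemma Jfac_ne_zero {M : SpMat g} {Z : Mc} (hM : M ∈ Matrix.symplecticGroup (Fin g) ℝ)
    (hZ : Z ∈ SiegelUHP g) : Jfac M Z ≠ 0 := by
  intro h0
  rw [Jfac_eq] at h0
  obtain ⟨v, hv, hv0⟩ := Matrix.exists_mulVec_eq_zero_iff.2 h0
  obtain ⟨h1, h2, h3⟩ := sympl_relC hM
  have hkey := key_id (Z := mconj Z) (W := Z) h1 h2 h3
  have e1 : star v ⬝ᵥ ((mconj Z * (bA M)ᵀ + (bB M)ᵀ) * (bC M * Z + bD M)) *ᵥ v = 0 := by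
    rw [← Matrix.mulVec_mulVec]
    rw [show bC M * Z + bD M = X2 M Z from rfl, hv0]
    simp
  have e2 : star v ⬝ᵥ ((mconj Z * (bC M)ᵀ + (bD M)ᵀ) * (bA M * Z + bB M)) *ᵥ v = 0 := by
    rw [← X2H hZ.1, ← Matrix.mulVec_mulVec, Matrix.dotProduct_mulVec, ← Matrix.star_mulVec,
      hv0, star_zero, zero_dotProduct]
  have e3 : star v ⬝ᵥ (mconj Z - Z) *ᵥ v = 0 := by
    rw [← hkey, Matrix.sub_mulVec, dotProduct_sub, e1, e2, sub_zero]
  rw [mconj_sub_self, Matrix.smul_mulVec, dotProduct_smul, smul_eq_mul,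
    mul_eq_zero] at e3
  rcases e3 with e3 | e3
  · simp [Complex.ext_iff] at e3
  · have := quad_pos hZ.2 hv
    rw [show Matrix.of (fun i j => (Z i j).im) = ImM Z from rfl] at this
    rw [e3] at this
    simp at this
end Aux3

section Aux4
open Matrix Complex

variable {g : ℕ}

local notation "Mc" => Matrix (Fin g) (Fin g) ℂ

def cvec (x : Fin g → ℝ) : Fin g → ℂ := fun i => (x i : ℂ)

lemma star_cvec (x : Fin g → ℝ) : star (cvec x) = cvec x := by
  funext i; simp [cvec, Complex.conj_ofReal]

lemma cvec_ne_zero {x : Fin g → ℝ} (hx : x ≠ 0) : cvec x ≠ 0 := by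
  intro h; apply hx; funext i
  have := congrFun h i
  simpa [cvec, Complex.ext_iff] using this

lemma cvec_dot (Q : Matrix (Fin g) (Fin g) ℝ) (x : Fin g → ℝ) :
    cvec x ⬝ᵥ cmat Q *ᵥ cvec x = ((x ⬝ᵥ Q *ᵥ x : ℝ) : ℂ) := by
  simp only [dotProduct, Matrix.mulVec, cvec, cmat_apply]
  push_cast
  rfl

lemma self_sub_mconj (Z : Mc) : Z - mconj Z = (2*Complex.I) • cmat (ImM Z) := by
  ext i j
  simp only [Matrix.sub_apply, Matrix.smul_apply, mconj, Matrix.map_apply, cmat_apply, ImM,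
    Matrix.of_apply, smul_eq_mul]
  apply Complex.ext <;> simp [Complex.mul_re, Complex.mul_im] <;> ring

lemma detX2_isUnit {M : SpMat g} {Z : Mc} (hM : M ∈ Matrix.symplecticGroup (Fin g) ℝ)
    (hZ : Z ∈ SiegelUHP g) : IsUnit (X2 M Z).det :=
  isUnit_iff_ne_zero.2 (by rw [← Jfac_eq]; exact Jfac_ne_zero hM hZ)

lemma X1tX2_symm {M : SpMat g} {Z : Mc} (hM : M ∈ Matrix.symplecticGroup (Fin g) ℝ)
    (hZ : Z ∈ SiegelUHP g) : (X1 M Z)ᵀ * X2 M Z = (X2 M Z)ᵀ * X1 M Z := by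
  obtain ⟨h1, h2, h3⟩ := sympl_relC hM
  have hkey := key_id (Z := Z) (W := Z) h1 h2 h3
  simp only [sub_self] at hkey
  rw [sub_eq_zero] at hkey
  have e1 : (X1 M Z)ᵀ = Z * (bA M)ᵀ + (bB M)ᵀ := by
    rw [X1, Matrix.transpose_add, Matrix.transpose_mul, hZ.1]
  have e2 : (X2 M Z)ᵀ = Z * (bC M)ᵀ + (bD M)ᵀ := by
    rw [X2, Matrix.transpose_add, Matrix.transpose_mul, hZ.1]
  rw [e1, e2, X1, X2]
  exact hkey

lemma spAct_isSymm {M : SpMat g} {Z : Mc} (hM : M ∈ Matrix.symplecticGroup (Fin g) ℝ)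
    (hZ : Z ∈ SiegelUHP g) : (spAct M Z).IsSymm := by
  have hdet := detX2_isUnit hM hZ
  have hdetT : IsUnit (X2 M Z)ᵀ.det := by rwa [Matrix.det_transpose]
  show (spAct M Z)ᵀ = spAct M Z
  rw [spAct_eq, Matrix.transpose_mul, Matrix.transpose_nonsing_inv]
  have e : (X2 M Z)ᵀ * (X1 M Z * (X2 M Z)⁻¹) = (X1 M Z)ᵀ := by
    rw [← Matrix.mul_assoc, ← X1tX2_symm hM hZ, Matrix.mul_nonsing_inv_cancel_right _ _ hdet]
  rw [← e, Matrix.nonsing_inv_mul_cancel_left _ _ hdetT]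

lemma mconj_inv {X : Mc} (h : IsUnit X.det) : (mconj X)⁻¹ = mconj X⁻¹ :=
  Matrix.inv_eq_right_inv (by rw [← mconj_mul, Matrix.mul_nonsing_inv _ h, mconj_one])

lemma mconj_spAct_eq {M : SpMat g} {Z : Mc} (hM : M ∈ Matrix.symplecticGroup (Fin g) ℝ)
    (hZ : Z ∈ SiegelUHP g) : mconj (spAct M Z) = ((X2 M Z)ᴴ)⁻¹ * (X1 M Z)ᴴ := by
  have hdet := detX2_isUnit hM hZ
  have hS := spAct_isSymm hM hZ
  have e1 : mconj (spAct M Z) = mconj (X1 M Z) * (mconj (X2 M Z))⁻¹ := by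
    rw [spAct_eq, mconj_mul, mconj_inv hdet]
  have e2 : (mconj (spAct M Z))ᵀ = mconj (spAct M Z) := by
    rw [← mconj_transpose, hS]
  calc mconj (spAct M Z) = (mconj (X1 M Z) * (mconj (X2 M Z))⁻¹)ᵀ := by rw [← e1, e2]
    _ = ((mconj (X2 M Z))⁻¹)ᵀ * (mconj (X1 M Z))ᵀ := by rw [Matrix.transpose_mul]
    _ = (((mconj (X2 M Z)))ᵀ)⁻¹ * (X1 M Z)ᴴ := by
        rw [Matrix.transpose_nonsing_inv]; rfl
    _ = ((X2 M Z)ᴴ)⁻¹ * (X1 M Z)ᴴ := by rfl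

lemma hmid {M : SpMat g} {Z : Mc} (hM : M ∈ Matrix.symplecticGroup (Fin g) ℝ)
    (hZ : Z ∈ SiegelUHP g) :
    (X2 M Z)ᴴ * X1 M Z - (X1 M Z)ᴴ * X2 M Z = (2*Complex.I) • cmat (ImM Z) := by
  obtain ⟨h1, h2, h3⟩ := sympl_relC hM
  have hkey := key_id (Z := mconj Z) (W := Z) h1 h2 h3
  rw [X2H hZ.1, X1H hZ.1, X1, X2]
  rw [show ∀ a b : Mc, a - b = -(b - a) from fun a b => (neg_sub b a).symm]
  rw [hkey, neg_sub, self_sub_mconj]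

lemma im_spAct_fact {M : SpMat g} {Z : Mc} (hM : M ∈ Matrix.symplecticGroup (Fin g) ℝ)
    (hZ : Z ∈ SiegelUHP g) :
    (2*Complex.I) • cmat (ImM (spAct M Z)) =
      ((X2 M Z)ᴴ)⁻¹ * ((2*Complex.I) • cmat (ImM Z)) * (X2 M Z)⁻¹ := by
  have hdet := detX2_isUnit hM hZ
  have hdetH : IsUnit ((X2 M Z)ᴴ).det := by
    rw [Matrix.det_conjTranspose]; exact hdet.star
  rw [← self_sub_mconj, ← hmid hM hZ, mconj_spAct_eq hM hZ, spAct_eq]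
  rw [Matrix.mul_sub, Matrix.sub_mul]
  rw [Matrix.nonsing_inv_mul_cancel_left _ _ hdetH]
  congr 1
  rw [Matrix.mul_assoc, Matrix.mul_nonsing_inv_cancel_right _ _ hdet]

lemma spAct_mem {M : SpMat g} {Z : Mc} (hM : M ∈ Matrix.symplecticGroup (Fin g) ℝ)
    (hZ : Z ∈ SiegelUHP g) : spAct M Z ∈ SiegelUHP g := by
  have hdet := detX2_isUnit hM hZ
  have hS := spAct_isSymm hM hZ
  refine ⟨hS, Matrix.PosDef.of_dotProduct_mulVec_pos ?_ ?_⟩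
  · show _ = _
    ext i j
    simp only [Matrix.conjTranspose_apply, Matrix.of_apply, star_trivial]
    have : spAct M Z j i = spAct M Z i j := by
      conv_lhs => rw [← hS]
      rw [Matrix.transpose_apply]
    rw [this]
  · intro x hx
    set xc := cvec x with hxc
    set u := (X2 M Z)⁻¹ *ᵥ xc with hu
    have hu0 : u ≠ 0 := by
      intro h
      apply cvec_ne_zero hx
      have : X2 M Z *ᵥ u = xc := by
        rw [hu, Matrix.mulVec_mulVec, Matrix.mul_nonsing_inv _ hdet, Matrix.one_mulVec]
      rw [h, Matrix.mulVec_zero] at this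
      exact this.symm
    have scal : xc ⬝ᵥ ((2*Complex.I) • cmat (ImM (spAct M Z))) *ᵥ xc
        = (2*Complex.I) * (star u ⬝ᵥ cmat (ImM Z) *ᵥ u) := by
      rw [im_spAct_fact hM hZ]
      rw [← Matrix.mulVec_mulVec, ← Matrix.mulVec_mulVec, Matrix.dotProduct_mulVec]
      have hstar : xc ᵥ* ((X2 M Z)ᴴ)⁻¹ = star u := by
        rw [hu, Matrix.star_mulVec, star_cvec, Matrix.conjTranspose_nonsing_inv]
      rw [hstar, ← hu, Matrix.smul_mulVec, dotProduct_smul, smul_eq_mul]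
    rw [Matrix.smul_mulVec, dotProduct_smul, smul_eq_mul, cvec_dot] at scal
    have h2I : (2*Complex.I) ≠ 0 := by simp [Complex.ext_iff]
    have scal2 : ((x ⬝ᵥ ImM (spAct M Z) *ᵥ x : ℝ) : ℂ) = star u ⬝ᵥ cmat (ImM Z) *ᵥ u :=
      mul_left_cancel₀ h2I scal
    have hpos := quad_pos (P := ImM Z) hZ.2 hu0
    have : (x ⬝ᵥ ImM (spAct M Z) *ᵥ x : ℝ) = (star u ⬝ᵥ cmat (ImM Z) *ᵥ u).re := by
      rw [← scal2, Complex.ofReal_re]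
    show 0 < star x ⬝ᵥ _ *ᵥ x
    rw [star_trivial]
    show 0 < x ⬝ᵥ ImM (spAct M Z) *ᵥ x
    rw [this]
    exact hpos
end Aux4

section Aux5
open Matrix Complex

variable {g : ℕ}

local notation "Mc" => Matrix (Fin g) (Fin g) ℂ

lemma blocks_mul (M N : SpMat g) :
    bA (M*N) = bA M * bA N + bB M * bC N ∧ bB (M*N) = bA M * bB N + bB M * bD N ∧
    bC (M*N) = bC M * bA N + bD M * bC N ∧ bD (M*N) = bC M * bB N + bD M * bD N := by
  have h : M * N = Matrix.fromBlocks
      (M.toBlocks₁₁*N.toBlocks₁₁ + M.toBlocks₁₂*N.toBlocks₂₁)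
      (M.toBlocks₁₁*N.toBlocks₁₂ + M.toBlocks₁₂*N.toBlocks₂₂)
      (M.toBlocks₂₁*N.toBlocks₁₁ + M.toBlocks₂₂*N.toBlocks₂₁)
      (M.toBlocks₂₁*N.toBlocks₁₂ + M.toBlocks₂₂*N.toBlocks₂₂) := by
    conv_lhs => rw [← Matrix.fromBlocks_toBlocks M, ← Matrix.fromBlocks_toBlocks N]
    rw [Matrix.fromBlocks_multiply]
  refine ⟨?_, ?_, ?_, ?_⟩ <;>
    simp [bA, bB, bC, bD, h, Matrix.toBlocks_fromBlocks₁₁, Matrix.toBlocks_fromBlocks₁₂,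
      Matrix.toBlocks_fromBlocks₂₁, Matrix.toBlocks_fromBlocks₂₂, cmat_add, cmat_mul]

lemma X2_mul {M N : SpMat g} {Z : Mc} (hN : N ∈ Matrix.symplecticGroup (Fin g) ℝ)
    (hZ : Z ∈ SiegelUHP g) :
    X2 (M*N) Z = X2 M (spAct N Z) * X2 N Z := by
  have hdN := detX2_isUnit hN hZ
  obtain ⟨-, -, h3, h4⟩ := blocks_mul M N
  rw [X2, h3, h4, X2, spAct_eq]
  have : (bC M * (X1 N Z * (X2 N Z)⁻¹) + bD M) * X2 N Z
      = bC M * X1 N Z + bD M * X2 N Z := by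
    rw [Matrix.add_mul, Matrix.mul_assoc, Matrix.nonsing_inv_mul_cancel_right _ _ hdN]
  rw [this, X1, X2]
  noncomm_ring

lemma X1_mul {M N : SpMat g} {Z : Mc} (hN : N ∈ Matrix.symplecticGroup (Fin g) ℝ)
    (hZ : Z ∈ SiegelUHP g) :
    X1 (M*N) Z = X1 M (spAct N Z) * X2 N Z := by
  have hdN := detX2_isUnit hN hZ
  obtain ⟨h1, h2, -, -⟩ := blocks_mul M N
  rw [X1, h1, h2, X1, spAct_eq]
  have : (bA M * (X1 N Z * (X2 N Z)⁻¹) + bB M) * X2 N Z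
      = bA M * X1 N Z + bB M * X2 N Z := by
    rw [Matrix.add_mul, Matrix.mul_assoc, Matrix.nonsing_inv_mul_cancel_right _ _ hdN]
  rw [this, X1, X2]
  noncomm_ring

lemma Jfac_cocycle {M N : SpMat g} {Z : Mc} (hN : N ∈ Matrix.symplecticGroup (Fin g) ℝ)
    (hZ : Z ∈ SiegelUHP g) :
    Jfac (M*N) Z = Jfac M (spAct N Z) * Jfac N Z := by
  rw [Jfac_eq, Jfac_eq, Jfac_eq, X2_mul hN hZ, Matrix.det_mul]

lemma spAct_mul {M N : SpMat g} {Z : Mc} (hN : N ∈ Matrix.symplecticGroup (Fin g) ℝ)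
    (hZ : Z ∈ SiegelUHP g) :
    spAct (M*N) Z = spAct M (spAct N Z) := by
  have hdN := detX2_isUnit hN hZ
  rw [spAct_eq, spAct_eq, X1_mul hN hZ, X2_mul hN hZ, Matrix.mul_inv_rev,
    Matrix.mul_assoc, ← Matrix.mul_assoc (X2 N Z), Matrix.mul_nonsing_inv _ hdN,
    Matrix.one_mul]

lemma iE_mem : iE g ∈ SiegelUHP g := by
  constructor
  · show (iE g)ᵀ = iE g
    rw [iE, Matrix.transpose_smul, Matrix.transpose_one]
  · have : (Matrix.of fun i j => ((iE g) i j).im) = (1 : Matrix (Fin g) (Fin g) ℝ) := by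
      ext i j
      by_cases h : i = j <;> simp [iE, Matrix.one_apply, h]
    rw [this]
    exact Matrix.PosDef.one

lemma posDef_smul {P : Matrix (Fin g) (Fin g) ℝ} (hP : P.PosDef) {a : ℝ} (ha : 0 < a) :
    (a • P).PosDef := by
  refine Matrix.PosDef.of_dotProduct_mulVec_pos ?_ (fun x hx => ?_)
  · show _ = _
    ext i j
    simp only [Matrix.conjTranspose_apply, Matrix.smul_apply, star_trivial]
    have := congrFun (congrFun hP.1 i) j
    simp only [Matrix.conjTranspose_apply, star_trivial] at this
    rw [this]
  · rw [Matrix.smul_mulVec, dotProduct_smul, smul_eq_mul]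
    exact mul_pos ha (by simpa using hP.dotProduct_mulVec_pos hx)

lemma posSemidef_smul {P : Matrix (Fin g) (Fin g) ℝ} (hP : P.PosSemidef) {a : ℝ} (ha : 0 ≤ a) :
    (a • P).PosSemidef := by
  refine Matrix.PosSemidef.of_dotProduct_mulVec_nonneg ?_ (fun x => ?_)
  · show _ = _
    ext i j
    simp only [Matrix.conjTranspose_apply, Matrix.smul_apply, star_trivial]
    have := congrFun (congrFun hP.1 i) j
    simp only [Matrix.conjTranspose_apply, star_trivial] at this
    rw [this]
  · rw [Matrix.smul_mulVec, dotProduct_smul, smul_eq_mul]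
    exact mul_nonneg ha (by simpa using hP.dotProduct_mulVec_nonneg x)

lemma siegel_convex : Convex ℝ (SiegelUHP g) := by
  intro Z₁ h₁ Z₂ h₂ a b ha hb hab
  constructor
  · show _ = _
    rw [Matrix.transpose_add, Matrix.transpose_smul, Matrix.transpose_smul, h₁.1, h₂.1]
  · have him : (Matrix.of fun i j => ((a • Z₁ + b • Z₂) i j).im)
        = a • (Matrix.of fun i j => ((Z₁ i j).im)) + b • (Matrix.of fun i j => ((Z₂ i j).im)) := by
      ext i j
      simp [Complex.add_im, Complex.smul_im]
    rw [him]
    rcases eq_or_lt_of_le ha with rfl | ha'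
    · have hb1 : b = 1 := by linarith
      simpa [hb1] using h₂.2
    rcases eq_or_lt_of_le hb with rfl | hb'
    · have ha1 : a = 1 := by linarith
      simpa [ha1] using h₁.2
    exact (posDef_smul h₁.2 ha').add (posDef_smul h₂.2 hb')
end Aux5

section Aux6
open Matrix Complex

variable {g : ℕ}

local notation "Mc" => Matrix (Fin g) (Fin g) ℂ

lemma contOn_inv : ContinuousOn (fun A : Matrix (Fin g) (Fin g) ℂ => A⁻¹) {A | A.det ≠ 0} := by
  refine ContinuousOn.congr (f := fun A : Matrix (Fin g) (Fin g) ℂ => A.det⁻¹ • A.adjugate)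
    ?_ (fun A _ => by rw [Matrix.inv_def, Ring.inverse_eq_inv])
  exact (continuous_id.matrix_det.continuousOn.inv₀ (fun A hA => hA)).smul
    continuous_id.matrix_adjugate.continuousOn

lemma contOn_mul {X : Type*} [TopologicalSpace X] {s : Set X} {f h : X → Matrix (Fin g) (Fin g) ℂ}
    (hf : ContinuousOn f s) (hh : ContinuousOn h s) : ContinuousOn (fun x => f x * h x) s := by
  rw [continuousOn_iff_continuous_restrict] at *
  exact hf.matrix_mul hh

lemma cont_X1 (M : SpMat g) : Continuous (fun Z : Matrix (Fin g) (Fin g) ℂ => X1 M Z) := by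
  exact (continuous_const.matrix_mul continuous_id).add continuous_const

lemma cont_X2 (M : SpMat g) : Continuous (fun Z : Matrix (Fin g) (Fin g) ℂ => X2 M Z) := by
  exact (continuous_const.matrix_mul continuous_id).add continuous_const

lemma contOn_spAct {M : SpMat g} (hM : M ∈ Matrix.symplecticGroup (Fin g) ℝ) :
    ContinuousOn (spAct M) (SiegelUHP g) := by
  have h2 : ContinuousOn (fun Z => (X2 M Z)⁻¹) (SiegelUHP g) := by
    refine contOn_inv.comp (cont_X2 M).continuousOn ?_
    intro Z hZ
    show (X2 M Z).det ≠ 0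
    rw [← Jfac_eq]
    exact Jfac_ne_zero hM hZ
  simpa only [← spAct_eq] using contOn_mul (cont_X1 M).continuousOn h2

/-- A continuous function on a preconnected set with values in `2πℤ` is constant. -/
lemma int_valued_const {X : Type*} [TopologicalSpace X] {s : Set X} (hs : IsPreconnected s)
    {F : X → ℝ} (hF : ContinuousOn F s) (hint : ∀ z ∈ s, ∃ k : ℤ, F z = 2*Real.pi*k)
    {a b : X} (ha : a ∈ s) (hb : b ∈ s) : F a = F b := by
  by_contra hne
  wlog hlt : F a < F b generalizing a b
  · exact this hb ha (Ne.symm hne) ((Ne.lt_or_gt hne).resolve_left hlt)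
  obtain ⟨m, hm⟩ := hint a ha
  obtain ⟨n, hn⟩ := hint b hb
  have hpi := Real.pi_pos
  have hmn : (m : ℝ) < n := by
    rw [hm, hn] at hlt
    nlinarith
  have hmn' : (m : ℝ) + 1 ≤ n := by exact_mod_cast Int.lt_iff_add_one_le.1 (by exact_mod_cast hmn)
  have hc : F a + Real.pi ∈ Set.Icc (F a) (F b) := by
    constructor
    · linarith
    · rw [hm, hn]; nlinarith
  obtain ⟨z, hz, hFz⟩ := hs.intermediate_value ha hb hF hc
  obtain ⟨k, hk⟩ := hint z hz
  rw [hk, hm] at hFz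
  have : (2*(k - m) : ℝ) = 1 := by
    have hpne : Real.pi ≠ 0 := ne_of_gt hpi
    have hfac : Real.pi * ((2*(k - m) : ℝ) - 1) = 0 := by push_cast; linear_combination hFz
    rcases mul_eq_zero.1 hfac with h | h
    · exact absurd h hpne
    · push_cast at h ⊢; linarith
  have h2 : (2*(k - m) : ℤ) = 1 := by exact_mod_cast this
  omega

lemma exp_arg_branch {L : SpMat g → Matrix (Fin g) (Fin g) ℂ → ℝ} (hL : IsArgBranch g L)
    {M N : SpMat g} (hM : M ∈ Matrix.symplecticGroup (Fin g) ℝ)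
    (hN : N ∈ Matrix.symplecticGroup (Fin g) ℝ) {Z : Matrix (Fin g) (Fin g) ℂ}
    (hZ : Z ∈ SiegelUHP g) :
    ∃ k : ℤ, L (M*N) Z - L M (spAct N Z) - L N Z = 2*Real.pi*k := by
  have hMN := Submonoid.mul_mem _ hM hN
  have hZ' := spAct_mem hN hZ
  have h1 := hL.2.1 (M*N) hMN Z hZ
  have h2 := hL.2.1 M hM (spAct N Z) hZ'
  have h3 := hL.2.1 N hN Z hZ
  have j1 := Jfac_ne_zero hMN hZ
  have j2 := Jfac_ne_zero hM hZ'
  have j3 := Jfac_ne_zero hN hZ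
  have a1 : (‖Jfac (M*N) Z‖ : ℂ) ≠ 0 :=
    Complex.ofReal_ne_zero.2 (norm_ne_zero_iff.2 j1)
  have a2 : (‖Jfac M (spAct N Z)‖ : ℂ) ≠ 0 :=
    Complex.ofReal_ne_zero.2 (norm_ne_zero_iff.2 j2)
  have a3 : (‖Jfac N Z‖ : ℂ) ≠ 0 :=
    Complex.ofReal_ne_zero.2 (norm_ne_zero_iff.2 j3)
  have hcoc := Jfac_cocycle (M := M) hN hZ
  have habs : (‖Jfac (M*N) Z‖ : ℂ)
      = ‖Jfac M (spAct N Z)‖ * ‖Jfac N Z‖ := by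
    rw [hcoc, norm_mul, Complex.ofReal_mul]
  have h1' : Complex.exp (Complex.I * (L (M*N) Z))
      = Jfac (M*N) Z / ‖Jfac (M*N) Z‖ := by
    rw [eq_div_iff a1, mul_comm]; exact h1
  have h2' : Complex.exp (Complex.I * (L M (spAct N Z)))
      = Jfac M (spAct N Z) / ‖Jfac M (spAct N Z)‖ := by
    rw [eq_div_iff a2, mul_comm]; exact h2
  have h3' : Complex.exp (Complex.I * (L N Z))
      = Jfac N Z / ‖Jfac N Z‖ := by
    rw [eq_div_iff a3, mul_comm]; exact h3
  have key : Complex.exp (Complex.I * (L (M*N) Z) - Complex.I * (L M (spAct N Z))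
      - Complex.I * (L N Z)) = 1 := by
    rw [Complex.exp_sub, Complex.exp_sub, h1', h2', h3', hcoc, norm_mul,
      Complex.ofReal_mul]
    field_simp
  rw [Complex.exp_eq_one_iff] at key
  obtain ⟨n, hn⟩ := key
  refine ⟨n, ?_⟩
  have : Complex.I * ((L (M*N) Z - L M (spAct N Z) - L N Z : ℝ) : ℂ)
      = Complex.I * ((2*Real.pi*(n:ℝ) : ℝ) : ℂ) := by
    push_cast
    rw [mul_sub, mul_sub, hn]
    ring
  have := mul_left_cancel₀ Complex.I_ne_zero this
  exact_mod_cast this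

lemma branch_const {L : SpMat g → Matrix (Fin g) (Fin g) ℂ → ℝ} (hL : IsArgBranch g L)
    {M N : SpMat g} (hM : M ∈ Matrix.symplecticGroup (Fin g) ℝ)
    (hN : N ∈ Matrix.symplecticGroup (Fin g) ℝ) {Z : Matrix (Fin g) (Fin g) ℂ}
    (hZ : Z ∈ SiegelUHP g) :
    L (M*N) Z - L M (spAct N Z) - L N Z
      = L (M*N) (iE g) - L M (spAct N (iE g)) - L N (iE g) := by
  have hMN := Submonoid.mul_mem _ hM hN
  have hcont : ContinuousOn (fun Z => L (M*N) Z - L M (spAct N Z) - L N Z) (SiegelUHP g) := by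
    refine ((hL.1 (M*N) hMN).sub ?_).sub (hL.1 N hN)
    exact (hL.1 M hM).comp (contOn_spAct hN) (fun Z hZ => spAct_mem hN hZ)
  exact int_valued_const siegel_convex.isPreconnected hcont
    (fun Z hZ => exp_arg_branch hL hM hN hZ) hZ iE_mem
end Aux6

section Aux7
open Matrix Complex

variable {g : ℕ}

lemma wcoc_cocycle {L : SpMat g → Matrix (Fin g) (Fin g) ℂ → ℝ} (hL : IsArgBranch g L)
    {M₁ M₂ M₃ : SpMat g} (h1 : M₁ ∈ Matrix.symplecticGroup (Fin g) ℝ)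
    (h2 : M₂ ∈ Matrix.symplecticGroup (Fin g) ℝ)
    (h3 : M₃ ∈ Matrix.symplecticGroup (Fin g) ℝ) :
    wcoc L (M₁*M₂) M₃ + wcoc L M₁ M₂ = wcoc L M₁ (M₂*M₃) + wcoc L M₂ M₃ := by
  have hZ0 : spAct M₃ (iE g) ∈ SiegelUHP g := spAct_mem h3 iE_mem
  have hact : spAct (M₂*M₃) (iE g) = spAct M₂ (spAct M₃ (iE g)) := spAct_mul h3 iE_mem
  have hconst := branch_const hL h1 h2 hZ0
  have hpi : (2*Real.pi) ≠ 0 := by positivity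
  unfold wcoc
  rw [← add_div, ← add_div, div_eq_div_iff hpi hpi]
  rw [mul_assoc M₁ M₂ M₃, hact] at *
  linear_combination (-(2*Real.pi)) * hconst

lemma Emul (r s t : ℝ) : Complex.exp (2*Real.pi*Complex.I*r*s) * Complex.exp (2*Real.pi*Complex.I*r*t)
    = Complex.exp (2*Real.pi*Complex.I*r*((s+t : ℝ) : ℂ)) := by
  rw [← Complex.exp_add]; congr 1; push_cast; ring

lemma Ediv (r s t : ℝ) : Complex.exp (2*Real.pi*Complex.I*r*s) / Complex.exp (2*Real.pi*Complex.I*r*t)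
    = Complex.exp (2*Real.pi*Complex.I*r*((s-t : ℝ) : ℂ)) := by
  rw [← Complex.exp_sub]; congr 1; push_cast; ring

lemma Eabs (r t : ℝ) : ‖Complex.exp (2*Real.pi*Complex.I*r*t)‖ = 1 := by
  have h : (2*Real.pi*Complex.I*r*t : ℂ) = ((2*Real.pi*r*t : ℝ) : ℂ) * Complex.I := by
    push_cast; ring
  rw [h, Complex.norm_exp_ofReal_mul_I]

end Aux7


/-- If `v` is a multiplier system of weight `r` on `Γ ⊂ Sp(g,ℤ)` and
`K ∈ Sp(g,ℤ)` normalizes `Γ`, then `ṽ(M) = v(KMK⁻¹)·σ(KMK⁻¹,K)/σ(K,M)` is again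
a multiplier system of weight `r` on `Γ`. -/
theorem conjugate_multiplier (g : ℕ)
    (L : SpMat g → Matrix (Fin g) (Fin g) ℂ → ℝ) (hL : IsArgBranch g L)
    (Γ : Set (SpMat g)) (hΓ : Γ ⊆ Matrix.symplecticGroup (Fin g) ℝ)
    (r : ℝ) (v : SpMat g → ℂ) (hv : IsMultiplier g L Γ r v)
    (K : SpMat g) (hK : K ∈ Matrix.symplecticGroup (Fin g) ℝ)
    (hKint : ∀ i j, ∃ n : ℤ, K i j = n)
    (hnorm : ∀ M ∈ Γ, K * M * K⁻¹ ∈ Γ) :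
    IsMultiplier g L Γ r (fun M =>
      v (K * M * K⁻¹) *
        Complex.exp (2 * Real.pi * Complex.I * r * wcoc L (K * M * K⁻¹) K) /
        Complex.exp (2 * Real.pi * Complex.I * r * wcoc L K M)) := by
  have hKdet : IsUnit K.det := SymplecticGroup.symplectic_det hK
  have hKK : K⁻¹ * K = 1 := Matrix.nonsing_inv_mul K hKdet
  have hKK' : K * K⁻¹ = 1 := Matrix.mul_nonsing_inv K hKdet
  have hKinv : K⁻¹ ∈ Matrix.symplecticGroup (Fin g) ℝ := by
    rw [SymplecticGroup.inv_eq_symplectic_inv K hK]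
    exact Submonoid.mul_mem _ (Submonoid.mul_mem _
      (SymplecticGroup.neg_mem (SymplecticGroup.J_mem _ _))
      (SymplecticGroup.transpose_mem hK)) (SymplecticGroup.J_mem _ _)
  have conj_mul : ∀ M N : SpMat g, (K*M*K⁻¹)*(K*N*K⁻¹) = K*(M*N)*K⁻¹ := by
    intro M N
    simp only [Matrix.mul_assoc]
    rw [← Matrix.mul_assoc K⁻¹ K (N * K⁻¹), hKK, Matrix.one_mul]
  have conj_K : ∀ M : SpMat g, (K*M*K⁻¹)*K = K*M := by
    intro M
    rw [Matrix.mul_assoc (K*M) K⁻¹ K, hKK, Matrix.mul_one]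
  constructor
  · intro M hM
    simp only []
    rw [norm_div, norm_mul, hv.1 _ (hnorm M hM), Eabs, Eabs]
    norm_num
  · intro M hM N hN
    simp only []
    have hMs := hΓ hM
    have hNs := hΓ hN
    have hM's : K*M*K⁻¹ ∈ Matrix.symplecticGroup (Fin g) ℝ := hΓ (hnorm M hM)
    have hN's : K*N*K⁻¹ ∈ Matrix.symplecticGroup (Fin g) ℝ := hΓ (hnorm N hN)
    -- cocycle identities
    have c1 := wcoc_cocycle hL hM's hN's hK
    have c2 := wcoc_cocycle hL hM's hK hNs
    have c3 := wcoc_cocycle hL hK hMs hNs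
    rw [conj_mul M N] at c1
    rw [conj_K M] at c2
    -- c1 : wcoc (K*(M*N)*K⁻¹) K + wcoc (KMK⁻¹) (KNK⁻¹) = wcoc (KMK⁻¹) (KN?) ...
    have heq : wcoc L (K*M*K⁻¹) (K*N*K⁻¹) + wcoc L (K*(M*N)*K⁻¹) K - wcoc L K (M*N)
        = wcoc L (K*M*K⁻¹) K - wcoc L K M + (wcoc L (K*N*K⁻¹) K - wcoc L K N)
          + wcoc L M N := by
      have cK : (K*N*K⁻¹)*K = K*N := conj_K N
      rw [cK] at c1
      linarith [c1, c2, c3]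
    -- expand v of the product
    have hvmul : v (K*(M*N)*K⁻¹) = v (K*M*K⁻¹) * v (K*N*K⁻¹) *
        Complex.exp (2*Real.pi*Complex.I*r*wcoc L (K*M*K⁻¹) (K*N*K⁻¹)) := by
      rw [← conj_mul M N]
      exact hv.2 _ (hnorm M hM) _ (hnorm N hN)
    rw [hvmul]
    set w1 := wcoc L (K*M*K⁻¹) (K*N*K⁻¹)
    set w2 := wcoc L (K*(M*N)*K⁻¹) K
    set w3 := wcoc L K (M*N)
    set w4 := wcoc L (K*M*K⁻¹) K
    set w5 := wcoc L K M
    set w6 := wcoc L (K*N*K⁻¹) K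
    set w7 := wcoc L K N
    set w8 := wcoc L M N
    set vM := v (K*M*K⁻¹)
    set vN := v (K*N*K⁻¹)
    calc vM * vN * Complex.exp (2*Real.pi*Complex.I*r*w1)
          * Complex.exp (2*Real.pi*Complex.I*r*w2) / Complex.exp (2*Real.pi*Complex.I*r*w3)
        = vM * vN * (Complex.exp (2*Real.pi*Complex.I*r*w1)
            * Complex.exp (2*Real.pi*Complex.I*r*w2) / Complex.exp (2*Real.pi*Complex.I*r*w3)) := by
          ring
      _ = vM * vN * Complex.exp (2*Real.pi*Complex.I*r*((w1 + w2 - w3 : ℝ) : ℂ)) := by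
          rw [Emul, Ediv]
      _ = vM * vN * Complex.exp (2*Real.pi*Complex.I*r*((w4 - w5 + (w6 - w7) + w8 : ℝ) : ℂ)) := by
          rw [heq]
      _ = vM * vN * (Complex.exp (2*Real.pi*Complex.I*r*((w4 - w5 : ℝ) : ℂ))
            * Complex.exp (2*Real.pi*Complex.I*r*((w6 - w7 : ℝ) : ℂ))
            * Complex.exp (2*Real.pi*Complex.I*r*w8)) := by
          rw [Emul, Emul]
      _ = vM * Complex.exp (2*Real.pi*Complex.I*r*w4) / Complex.exp (2*Real.pi*Complex.I*r*w5)
          * (vN * Complex.exp (2*Real.pi*Complex.I*r*w6) / Complex.exp (2*Real.pi*Complex.I*r*w7))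
          * Complex.exp (2*Real.pi*Complex.I*r*w8) := by
          rw [← Ediv, ← Ediv]
          ring
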